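/- Feasibility criterion: the power minimization solution is valid for the original problem if and only if p_max ≥ p_th, where p_th = C_1/g_jam − (λ_r/g_jam)Σ_n C_{2,n}² g_radar,n + λ_r Σ_n C_{2,n}². Formally: the LP {min total power s.t. jamming-equality constraint and radar constraints} has optimal value p_th, and the constraint 'total power ≤ p_max' together with the equality constraint is satisfiable if and only if p_max ≥ p_th. -/

import Mathlib

/-- Case-classification criterion (Section III-B, Theorem 2): the power
minimization LP has optimal value
`p_th = C₁/g_jam − (λ_r/g_jam) Σ C_{2,n}² g_radar,n + λ_r Σ C_{2,n}²`, and a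
feasible point with total power at most `p_max` exists iff `p_max ≥ p_th`. -/
theorem power_min_feasibility_criterion (N : ℕ) (hN : 1 ≤ N)
    (lamr gjam C1 pmax : ℝ) (gr C2sq : Fin N → ℝ)
    (hlam : 0 < lamr) (hgjam : 0 < gjam)
    (hgr : ∀ n, 0 ≤ gr n) (hgrlt : ∀ n, gr n < gjam)
    (hC2sq : ∀ n, 0 < C2sq n)
    (hfeas : lamr * ∑ n, C2sq n * gr n ≤ C1)
    (pth : ℝ)
    (hpth : pth = C1 / gjam - (lamr / gjam) * ∑ n, C2sq n * gr n +
      lamr * ∑ n, C2sq n) :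
    IsLeast {p : ℝ | ∃ xj xr : Fin N → ℝ, (∀ n, 0 ≤ xj n) ∧
      (∀ n, C2sq n ≤ xr n) ∧
      (∑ n, lamr * (xj n * gjam + xr n * gr n) = C1) ∧
      p = ∑ n, lamr * (xj n + xr n)} pth ∧
    ((∃ xj xr : Fin N → ℝ, (∀ n, 0 ≤ xj n) ∧ (∀ n, C2sq n ≤ xr n) ∧
      (∑ n, lamr * (xj n * gjam + xr n * gr n) = C1) ∧
      ∑ n, lamr * (xj n + xr n) ≤ pmax) ↔ pth ≤ pmax) := by
  set Sg : ℝ := ∑ n, C2sq n * gr n with hSg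
  set S : ℝ := ∑ n, C2sq n with hS
  -- the optimal point
  have n0 : Fin N := ⟨0, hN⟩
  set t : ℝ := (C1 - lamr * Sg) / (lamr * gjam) with ht
  have ht0 : 0 ≤ t := div_nonneg (by linarith) (by positivity)
  set xj0 : Fin N → ℝ := fun n => if n = n0 then t else 0 with hxj0
  have hsum_xj0 : ∑ n, lamr * (xj0 n * gjam + C2sq n * gr n)
      = lamr * gjam * t + lamr * Sg := by
    simp only [hxj0, mul_add, Finset.sum_add_distrib, ite_mul, mul_ite,
      mul_zero, zero_mul, Finset.sum_ite_eq', Finset.mem_univ, if_true,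
      ← Finset.mul_sum, hSg]
    ring
  have heq0 : ∑ n, lamr * (xj0 n * gjam + C2sq n * gr n) = C1 := by
    rw [hsum_xj0, ht]
    field_simp
    ring
  have hpow0 : ∑ n, lamr * (xj0 n + C2sq n) = pth := by
    have : ∑ n, lamr * (xj0 n + C2sq n) = lamr * t + lamr * S := by
      simp only [hxj0, mul_add, Finset.sum_add_distrib, mul_ite, mul_zero,
        Finset.sum_ite_eq', Finset.mem_univ, if_true, ← Finset.mul_sum, hS]
    rw [this, hpth, ht]
    field_simp
  have hmem : pth ∈ {p : ℝ | ∃ xj xr : Fin N → ℝ, (∀ n, 0 ≤ xj n) ∧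
      (∀ n, C2sq n ≤ xr n) ∧
      (∑ n, lamr * (xj n * gjam + xr n * gr n) = C1) ∧
      p = ∑ n, lamr * (xj n + xr n)} := by
    exact ⟨xj0, C2sq, fun n => by dsimp [xj0]; split <;> simp [ht0],
      fun n => le_refl _, heq0, hpow0.symm⟩
  -- lower bound
  have hlb : ∀ xj xr : Fin N → ℝ, (∀ n, 0 ≤ xj n) → (∀ n, C2sq n ≤ xr n) →
      (∑ n, lamr * (xj n * gjam + xr n * gr n) = C1) →
      pth ≤ ∑ n, lamr * (xj n + xr n) := by
    intro xj xr hxj hxr heq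
    have hC1 : C1 = lamr * gjam * (∑ n, xj n) + lamr * (∑ n, xr n * gr n) := by
      rw [← heq, Finset.mul_sum, Finset.mul_sum, ← Finset.sum_add_distrib]
      exact Finset.sum_congr rfl fun n _ => by ring
    have hP : ∑ n, lamr * (xj n + xr n)
        = lamr * (∑ n, xj n) + lamr * (∑ n, xr n) := by
      rw [Finset.mul_sum, Finset.mul_sum, ← Finset.sum_add_distrib]
      exact Finset.sum_congr rfl fun n _ => by ring
    have hnn : 0 ≤ ∑ n, (lamr / gjam) * ((xr n - C2sq n) * (gjam - gr n)) := by
      apply Finset.sum_nonneg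
      intro n _
      exact mul_nonneg (by positivity)
        (mul_nonneg (by linarith [hxr n]) (by linarith [hgrlt n]))
    have hid : ∑ n, (lamr / gjam) * ((xr n - C2sq n) * (gjam - gr n))
        = (lamr / gjam) * (gjam * (∑ n, xr n) - (∑ n, xr n * gr n)
          - gjam * S + Sg) := by
      rw [hS, hSg, ← Finset.mul_sum]
      congr 1
      rw [Finset.mul_sum, Finset.mul_sum, ← Finset.sum_sub_distrib,
        ← Finset.sum_sub_distrib, ← Finset.sum_add_distrib]
      exact Finset.sum_congr rfl fun n _ => by ring
    rw [hP, hpth, hC1]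
    rw [hid] at hnn
    have hg : gjam ≠ 0 := ne_of_gt hgjam
    have key : lamr * (∑ n, xj n) + lamr * (∑ n, xr n) -
        ((lamr * gjam * (∑ n, xj n) + lamr * (∑ n, xr n * gr n)) / gjam
          - lamr / gjam * Sg + lamr * S)
        = (lamr / gjam) * (gjam * (∑ n, xr n) - (∑ n, xr n * gr n)
          - gjam * S + Sg) := by
      field_simp; ring
    linarith [hnn, key]
  constructor
  · exact ⟨hmem, by rintro p ⟨xj, xr, h1, h2, h3, h4⟩; rw [h4]; exact hlb xj xr h1 h2 h3⟩
  · constructor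
    · rintro ⟨xj, xr, h1, h2, h3, h4⟩
      exact le_trans (hlb xj xr h1 h2 h3) h4
    · intro h
      exact ⟨xj0, C2sq, fun n => by dsimp [xj0]; split <;> simp [ht0],
        fun n => le_refl _, heq0, by rw [hpow0]; exact h⟩
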